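/- arXiv:1508.05667 — 2 statements merged into one kernel-verified Lean document; each statement's English description precedes it below -/
import Mathlib

section
/- Let F be a fusion system on a finite p-group S, and let X be a finite left semicharacteristic biset for F containing a subbiset isomorphic to S×_{(S,id)}S. Let G be the group (under composition) of all bijections f : X → X satisfying f(xs) = f(x)s for all x ∈ X and s ∈ S, and embed S into G via s ↦ (x ↦ sx). Then F = F_S(G). -/
/-- The conjugation homomorphism `c_s : P → Q`, `u ↦ s u s⁻¹`,
for subgroups `P, Q` of `S` with `s P s⁻¹ ≤ Q`. -/
def conjHom {S : Type} [Group S] (P Q : Subgroup S) (s : S)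
    (h : ∀ p ∈ P, s * p * s⁻¹ ∈ Q) : ↥P →* ↥Q where
  toFun p := ⟨s * (p : S) * s⁻¹, h p p.2⟩
  map_one' := by ext; simp
  map_mul' a b := by ext; push_cast; group

/-- A fusion system on a group `S`: for each pair of subgroups `P, Q` of `S` a set
of injective group homomorphisms `P → Q`, containing all conjugation maps induced by
elements of `S`, closed under composition, and such that every morphism, corestricted
to an isomorphism onto its image, lies in the system together with its inverse. -/
structure FusionSystem (S : Type) [Group S] where
  Hom : ∀ P Q : Subgroup S, Set (↥P →* ↥Q)
  inj : ∀ {P Q : Subgroup S} {φ : ↥P →* ↥Q}, φ ∈ Hom P Q → Function.Injective φ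
  conj_mem : ∀ (P Q : Subgroup S) (s : S) (h : ∀ p ∈ P, s * p * s⁻¹ ∈ Q),
    conjHom P Q s h ∈ Hom P Q
  comp_mem : ∀ {P Q R : Subgroup S} {φ : ↥P →* ↥Q} {ψ : ↥Q →* ↥R},
    φ ∈ Hom P Q → ψ ∈ Hom Q R → ψ.comp φ ∈ Hom P R
  restrict_mem : ∀ {P Q : Subgroup S} {φ : ↥P →* ↥Q}, φ ∈ Hom P Q →
    ∃ ψ ∈ Hom P (Subgroup.map Q.subtype φ.range),
      ∃ χ ∈ Hom (Subgroup.map Q.subtype φ.range) P,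
        (∀ u : ↥P, ((ψ u : S)) = ((φ u : ↥Q) : S)) ∧
        (∀ u, χ (ψ u) = u) ∧ (∀ v, ψ (χ v) = v)

/-- Two subgroups are `F`-conjugate if there is an isomorphism between them in `F`. -/
def FConj {S : Type} [Group S] (F : FusionSystem S) (P P' : Subgroup S) : Prop :=
  ∃ φ ∈ F.Hom P P', Function.Bijective φ

/-- An `S`-`S`-biset: a set with commuting left and right `S`-actions. -/
structure Biset (S : Type) [Group S] where
  X : Type
  l : S → X → X
  r : X → S → X
  l_one : ∀ x, l 1 x = x
  l_mul : ∀ s t x, l (s * t) x = l s (l t x)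
  r_one : ∀ x, r x 1 = x
  r_mul : ∀ x s t, r x (s * t) = r (r x s) t
  lr_comm : ∀ s x t, l s (r x t) = r (l s x) t

/-- The relation on `S × S` generated by `(xq, y) ∼ (x, φ(q)y)` for `q ∈ Q`. -/
def amalgRel {S : Type} [Group S] (Q : Subgroup S) (φ : ↥Q →* S) :
    S × S → S × S → Prop :=
  fun a b => ∃ q : Q, a.1 = b.1 * q ∧ b.2 = φ q * a.2

/-- The `S`-`S`-biset `S ×_{(Q,φ)} S`. -/
def amalgBiset {S : Type} [Group S] (Q : Subgroup S) (φ : ↥Q →* S) : Biset S where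
  X := Quot (amalgRel Q φ)
  l s := Quot.map (fun a => (s * a.1, a.2))
    (by rintro a b ⟨q, h1, h2⟩; exact ⟨q, by simp only []; rw [h1, mul_assoc], h2⟩)
  r x t := Quot.map (fun a => (a.1, a.2 * t))
    (by rintro a b ⟨q, h1, h2⟩; exact ⟨q, h1, by simp only []; rw [h2, mul_assoc]⟩) x
  l_one := by rintro ⟨a⟩; simp [Quot.map]
  l_mul := by rintro s t ⟨a⟩; simp [Quot.map, mul_assoc]
  r_one := by rintro ⟨a⟩; simp [Quot.map]
  r_mul := by rintro ⟨a⟩ s t; simp [Quot.map, mul_assoc]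
  lr_comm := by rintro s ⟨a⟩ t; simp [Quot.map]

/-- An injective map of `S`-`S`-bisets from `A` into `B` (a copy of `A` as a subbiset of `B`). -/
def ContainsCopy {S : Type} [Group S] (A B : Biset S) : Prop :=
  ∃ e : A.X → B.X, Function.Injective e ∧
    (∀ s z, e (A.l s z) = B.l s (e z)) ∧ (∀ z t, e (A.r z t) = B.r (e z) t)

/-- An isomorphism of `S`-`S`-bisets from `A` onto the subset `O` of `B`. -/
def CopyOnto {S : Type} [Group S] (A B : Biset S) (O : Set B.X) : Prop :=
  ∃ e : A.X → B.X, Function.Injective e ∧ Set.range e = O ∧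
    (∀ s z, e (A.l s z) = B.l s (e z)) ∧ (∀ z t, e (A.r z t) = B.r (e z) t)

/-- `X` is `F`-generated: every transitive subbiset (i.e. every `S`-`S`-orbit) of `X`
is isomorphic to `S ×_{(Q,φ)} S` for some `Q ≤ S` and `φ ∈ Hom_F(Q, S)`. -/
def FGenerated {S : Type} [Group S] (F : FusionSystem S) (B : Biset S) : Prop :=
  ∀ x : B.X, ∃ (Q : Subgroup S) (φ : ↥Q →* ↥(⊤ : Subgroup S)), φ ∈ F.Hom Q ⊤ ∧
    CopyOnto (amalgBiset Q ((Subgroup.subtype ⊤).comp φ)) B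
      {y | ∃ s t : S, y = B.l s (B.r x t)}

/-- `X` is left `F`-stable: for every `Q ≤ S` and `φ ∈ Hom_F(Q, S)`, the `Q`-`S`-bisets
`_Q X` and `_φ X` are isomorphic. -/
def LeftFStable {S : Type} [Group S] (F : FusionSystem S) (B : Biset S) : Prop :=
  ∀ (Q : Subgroup S) (φ : ↥Q →* ↥(⊤ : Subgroup S)), φ ∈ F.Hom Q ⊤ →
    ∃ e : B.X ≃ B.X,
      (∀ (q : ↥Q) (x : B.X), e (B.l (q : S) x) = B.l ((φ q : ↥(⊤ : Subgroup S)) : S) (e x)) ∧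
      (∀ (x : B.X) (s : S), e (B.r x s) = B.r (e x) s)

/-- A left semicharacteristic biset for `F`: a finite `S`-`S`-biset which is
`F`-generated and left `F`-stable. -/
def IsLeftSemicharacteristic {S : Type} [Group S] (F : FusionSystem S) (B : Biset S) : Prop :=
  Finite B.X ∧ FGenerated F B ∧ LeftFStable F B

/-- The group of automorphisms of `X` as a right `S`-set: all bijections `f : X → X`
with `f (x s) = f x · s`. -/
def rEquivGroup {S : Type} [Group S] (B : Biset S) : Subgroup (Equiv.Perm B.X) where
  carrier := {f | ∀ x s, f (B.r x s) = B.r (f x) s}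
  one_mem' := fun _ _ => rfl
  mul_mem' := by
    intro f g hf hg x s
    simp only [Equiv.Perm.mul_apply, hg x s, hf (g x) s]
  inv_mem' := by
    intro f hf x s
    apply f.injective
    rw [hf]; simp

/-- The virtual fixed-point count `|X^P|` of a virtual `S`-set given by the formal
sum `Σ_H (c H) · S/H`. -/
noncomputable def fixedCount {S : Type} [Group S] (c : Subgroup S → ℚ) (P : Subgroup S) : ℚ :=
  ∑ᶠ H : Subgroup S, c H * (Nat.card {x : S ⧸ H // ∀ p ∈ P, p • x = x} : ℚ)

/-- Subgroups `P, Q` of `S` are `S`-conjugate. -/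
def SConj {S : Type} [Group S] (P Q : Subgroup S) : Prop :=
  ∃ g : S, Q = Subgroup.map (MulAut.conj g).toMonoidHom P

/-- An isomorphism of `S`-`S`-bisets. -/
def BisetIso {S : Type} [Group S] (A B : Biset S) : Prop :=
  ∃ e : A.X ≃ B.X,
    (∀ s z, e (A.l s z) = B.l s (e z)) ∧ (∀ z t, e (A.r z t) = B.r (e z) t)

/-- Disjoint union of a family of `S`-`S`-bisets. -/
def sigmaBiset {S : Type} [Group S] {ι : Type} (B : ι → Biset S) : Biset S where
  X := Σ i : ι, (B i).X
  l s x := ⟨x.1, (B x.1).l s x.2⟩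
  r x t := ⟨x.1, (B x.1).r x.2 t⟩
  l_one := by rintro ⟨i, x⟩; simp [(B i).l_one]
  l_mul := by rintro s t ⟨i, x⟩; simp [(B i).l_mul]
  r_one := by rintro ⟨i, x⟩; simp [(B i).r_one]
  r_mul := by rintro ⟨i, x⟩ s t; simp [(B i).r_mul]
  lr_comm := by rintro s ⟨i, x⟩ t; simp [(B i).lr_comm]

/-- The biset `S ×_{(S,α)} S` for an endomorphism `α` of `S` (with `Q = S`). -/
def fullAmalg (S : Type) [Group S] (α : S →* S) : Biset S :=
  amalgBiset ⊤ (α.comp (Subgroup.subtype ⊤))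

/-- `Y₀ = ∐ᵢ S ×_{(S,αᵢ)} S` for a family of morphisms `αᵢ ∈ Hom_F(S,S)`. -/
def diagUnion (S : Type) [Group S] {n : ℕ}
    (α : Fin n → (↥(⊤ : Subgroup S) →* ↥(⊤ : Subgroup S))) : Biset S :=
  sigmaBiset (fun i => amalgBiset ⊤ ((Subgroup.subtype ⊤).comp (α i)))

lemma amalgRel_equivalence {S : Type} [Group S] (Q : Subgroup S) (φ : ↥Q →* S) :
    Equivalence (amalgRel Q φ) := by
  constructor
  · intro a; exact ⟨1, by simp, by simp⟩
  · rintro a b ⟨q, h1, h2⟩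
    exact ⟨q⁻¹, by rw [h1]; simp, by rw [h2]; simp [mul_assoc]⟩
  · rintro a b c ⟨q, h1, h2⟩ ⟨q', h1', h2'⟩
    exact ⟨q' * q, by rw [h1, h1']; simp [mul_assoc], by rw [h2', h2]; simp [mul_assoc]⟩

lemma amalg_mk_eq {S : Type} [Group S] (Q : Subgroup S) (φ : ↥Q →* S) (a b : S × S) :
    (Quot.mk (amalgRel Q φ) a = Quot.mk (amalgRel Q φ) b) ↔ amalgRel Q φ a b := by
  rw [Quot.eq]; exact (amalgRel_equivalence Q φ).eqvGen_iff

/-- If `X` is a left semicharacteristic biset for `F` containing a copy of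
`S ×_{(S,id)} S`, and `G` is the group of right-`S`-equivariant bijections of `X`,
with `S` embedded into `G` via `s ↦ (x ↦ s x)`, then `F = F_S(G)`. -/
theorem fusionSystem_eq_of_leftSemicharacteristic
    (p : ℕ) [Fact p.Prime] (S : Type) [Group S] [Fintype S] (hS : IsPGroup p S)
    (F : FusionSystem S) (B : Biset S)
    (hchar : IsLeftSemicharacteristic F B)
    (hdiag : ContainsCopy (amalgBiset (⊤ : Subgroup S) (Subgroup.subtype ⊤)) B)
    (ι : S →* ↥(rEquivGroup B))
    (hι : ∀ (s : S) (x : B.X), ((ι s : Equiv.Perm B.X)) x = B.l s x) :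
    ∀ (P Q : Subgroup S) (φ : ↥P →* ↥Q),
      φ ∈ F.Hom P Q ↔
        ∃ g : ↥(rEquivGroup B), ∀ u : ↥P, ι ((φ u : ↥Q) : S) = g * ι (u : S) * g⁻¹ := by
  obtain ⟨_, hgen, hstab⟩ := hchar
  intro P Q φ
  constructor
  · -- forward: φ ∈ F ⇒ realized by conjugation
    intro hφ
    have hincl : ∀ q ∈ Q, (1 : S) * q * 1⁻¹ ∈ (⊤ : Subgroup S) := fun _ _ => trivial
    have hφ'F : (conjHom Q ⊤ 1 hincl).comp φ ∈ F.Hom P ⊤ :=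
      F.comp_mem hφ (F.conj_mem Q ⊤ 1 hincl)
    obtain ⟨e, hel, her⟩ := hstab P _ hφ'F
    refine ⟨⟨e, her⟩, fun u => ?_⟩
    apply Subtype.ext
    apply Equiv.ext
    intro x
    have h2 := hel u (e.symm x)
    simp only [conjHom, MonoidHom.comp_apply, MonoidHom.coe_mk, OneHom.coe_mk,
      one_mul, inv_one, mul_one, Equiv.apply_symm_apply] at h2
    have hmm : (((⟨e, her⟩ : ↥(rEquivGroup B)) * ι (u : S) * (⟨e, her⟩ : ↥(rEquivGroup B))⁻¹ :
          ↥(rEquivGroup B)) : Equiv.Perm B.X) x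
        = e ((ι (u : S) : Equiv.Perm B.X) (e.symm x)) := rfl
    show (ι ((φ u : ↥Q) : S) : Equiv.Perm B.X) x = _
    rw [hι, hmm, hι, h2]
  · -- backward
    rintro ⟨g, hg⟩
    -- the special point x₀ from the copy of S ×_{(S,id)} S
    obtain ⟨e₀, -, he₀l, he₀r⟩ := hdiag
    set x₀ : B.X := e₀ (Quot.mk _ ((1 : S), (1 : S))) with hx₀
    have hx₀key : ∀ s : S, B.l s x₀ = B.r x₀ s := by
      intro s
      rw [hx₀]; erw [← he₀l, ← he₀r]
      congr 1
      show Quot.mk _ (s * 1, (1 : S)) = Quot.mk _ ((1 : S), 1 * s)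
      rw [amalg_mk_eq]
      exact ⟨⟨s, trivial⟩, by simp, by simp⟩
    set y₀ : B.X := (g : Equiv.Perm B.X) x₀ with hy₀
    have hykey : ∀ u : ↥P, B.l ((φ u : ↥Q) : S) y₀ = B.r y₀ (u : S) := by
      intro u
      have h1 := congrArg (fun f : ↥(rEquivGroup B) => (f : Equiv.Perm B.X) y₀) (hg u)
      have hmm : ((g * ι (u : S) * g⁻¹ : ↥(rEquivGroup B)) : Equiv.Perm B.X) y₀
          = (g : Equiv.Perm B.X) ((ι (u : S) : Equiv.Perm B.X)
              ((g : Equiv.Perm B.X)⁻¹ y₀)) := rfl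
      rw [hmm] at h1
      rw [hy₀, Equiv.Perm.inv_def, Equiv.symm_apply_apply] at h1
      rw [← hι ((φ u : ↥Q) : S) y₀, h1, hι, hx₀key, ← g.2 x₀ (u : S)]
    -- F-generation at y₀
    obtain ⟨R, ψ, hψF, e', he'inj, he'range, he'l, he'r⟩ := hgen y₀
    have hy₀mem : y₀ ∈ {y | ∃ s t : S, y = B.l s (B.r y₀ t)} :=
      ⟨1, 1, by rw [B.r_one, B.l_one]⟩
    rw [← he'range] at hy₀mem
    obtain ⟨z, hz⟩ := hy₀mem
    obtain ⟨⟨a, b⟩, rfl⟩ := z.exists_rep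
    -- extract the defining relation
    have hrel : ∀ u : ↥P, ∃ q : ↥R,
        ((φ u : ↥Q) : S) * a = a * q ∧ b * (u : S) = ((ψ q : ↥(⊤ : Subgroup S)) : S) * b := by
      intro u
      have h1 : e' ((amalgBiset R ((Subgroup.subtype ⊤).comp ψ)).l ((φ u : ↥Q) : S)
            (Quot.mk _ (a, b)))
          = e' ((amalgBiset R ((Subgroup.subtype ⊤).comp ψ)).r (Quot.mk _ (a, b)) (u : S)) := by
        erw [he'l, he'r]; rw [hz, hykey]
      have h2 := he'inj h1
      have h3 : Quot.mk _ (((φ u : ↥Q) : S) * a, b)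
          = Quot.mk (amalgRel R ((Subgroup.subtype ⊤).comp ψ)) (a, b * (u : S)) := h2
      rw [amalg_mk_eq] at h3
      obtain ⟨q, hq1, hq2⟩ := h3
      exact ⟨q, hq1, hq2⟩
    choose r hr1 hr2 using hrel
    -- restrict ψ to its image
    obtain ⟨ψ₁, hψ₁, χ, hχ, hψ₁coe, hχψ₁, hψ₁χ⟩ := F.restrict_mem hψF
    -- conjugation by b : P → M
    have hb : ∀ p ∈ P, b * p * b⁻¹ ∈ Subgroup.map (⊤ : Subgroup S).subtype ψ.range := by
      intro p hp
      have h := hr2 ⟨p, hp⟩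
      have h' : b * p * b⁻¹ = ((ψ (r ⟨p, hp⟩) : ↥(⊤ : Subgroup S)) : S) := by
        rw [mul_inv_eq_iff_eq_mul]; exact h
      rw [h']
      exact ⟨ψ (r ⟨p, hp⟩), ⟨r ⟨p, hp⟩, rfl⟩, rfl⟩
    have hcb := F.conj_mem P (Subgroup.map (⊤ : Subgroup S).subtype ψ.range) b hb
    have hχcb : χ.comp (conjHom P _ b hb) ∈ F.Hom P R := F.comp_mem hcb hχ
    -- identify χ (c_b u) with r u
    have hru : ∀ u : ↥P, χ.comp (conjHom P _ b hb) u = r u := by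
      intro u
      have h1 : ψ₁ (r u) = conjHom P _ b hb u := by
        apply Subtype.ext
        rw [hψ₁coe]
        show ((ψ (r u) : ↥(⊤ : Subgroup S)) : S) = b * (u : S) * b⁻¹
        symm
        rw [mul_inv_eq_iff_eq_mul]
        exact hr2 u
      show χ (conjHom P _ b hb u) = r u
      rw [← h1, hχψ₁]
    -- restrict χ ∘ c_b to its image
    obtain ⟨θ, hθ, χ', hχ', hθcoe, -, -⟩ := F.restrict_mem hχcb
    have ha : ∀ n ∈ Subgroup.map R.subtype (χ.comp (conjHom P _ b hb)).range,
        a * n * a⁻¹ ∈ Q := by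
      rintro n hn
      obtain ⟨x, ⟨u, hu⟩, rfl⟩ := hn
      have h' : a * (R.subtype x) * a⁻¹ = ((φ u : ↥Q) : S) := by
        rw [← hu, hru u]
        show a * ((r u : ↥R) : S) * a⁻¹ = _
        rw [mul_inv_eq_iff_eq_mul]
        exact (hr1 u).symm
      rw [h']
      exact (φ u).2
    have hca := F.conj_mem _ Q a ha
    have hfinal : (conjHom _ Q a ha).comp θ ∈ F.Hom P Q := F.comp_mem hθ hca
    have heq : (conjHom _ Q a ha).comp θ = φ := by
      ext u
      show a * ((θ u : ↥(Subgroup.map R.subtype (χ.comp (conjHom P _ b hb)).range)) : S) * a⁻¹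
        = ((φ u : ↥Q) : S)
      rw [hθcoe u, hru u]
      show a * ((r u : ↥R) : S) * a⁻¹ = _
      rw [mul_inv_eq_iff_eq_mul]
      exact (hr1 u).symm
    rwa [heq] at hfinal
end

section
/- Let F be a fusion system on a finite p-group S, let H be a collection of subgroups of S closed under F-conjugation and under taking subgroups, and let X₀ be a virtual S-set with rational coefficients such that |X₀^P| = |X₀^{P'}| for all F-conjugate P, P' ∉ H. Let 𝒫 be an F-conjugacy class of subgroups contained in H each of whose members is maximal under inclusion among the members of H, and choose P ∈ 𝒫 with |X₀^P| ≥ |X₀^{P'}| for all P' ∈ 𝒫. Define X₁ = X₀ + Σ_{P'} ((|X₀^P| − |X₀^{P'}|)/|N_S(P')/P'|) · S/P', where P' runs over a set of representatives of the subgroups in 𝒫 up to S-conjugacy. Then: (a) |X₁^{P'}| = |X₁^{P''}| for all P', P'' ∈ 𝒫; (b) |X₁^Q| = |X₀^Q| for every subgroup Q of S with Q ∉ H; and (c) X₁ − X₀ is a virtual S-set with nonnegative rational coefficients. -/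
section AuxStab

open Subgroup

variable {S : Type} [Group S]

private def mapConj (g : S) (Q : Subgroup S) : Subgroup S :=
  Subgroup.map (MulAut.conj g).toMonoidHom Q

private lemma mem_mapConj {g x : S} {Q : Subgroup S} :
    x ∈ mapConj g Q ↔ g⁻¹ * x * g ∈ Q := by
  rw [mapConj, Subgroup.mem_map_equiv]; simp [MulAut.conj]

private lemma mapConj_mapConj (a b : S) (Q : Subgroup S) :
    mapConj a (mapConj b Q) = mapConj (a * b) Q := by
  ext x; simp only [mem_mapConj]
  constructor <;> intro h
  · have : (a*b)⁻¹ * x * (a*b) = b⁻¹ * (a⁻¹ * x * a) * b := by group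
    rw [this]; exact h
  · have : b⁻¹ * (a⁻¹ * x * a) * b = (a*b)⁻¹ * x * (a*b) := by group
    rw [this]; exact h

private lemma mapConj_inv (g : S) (Q : Subgroup S) : mapConj g⁻¹ (mapConj g Q) = Q := by
  ext x; simp only [mem_mapConj]
  constructor <;> intro h
  · have : x = g⁻¹ * (g⁻¹⁻¹ * x * g⁻¹) * g := by group
    rw [this]; exact h
  · have : g⁻¹ * (g⁻¹⁻¹ * x * g⁻¹) * g = x := by group
    rw [this]; exact h

private lemma fconj_mapConj (F : FusionSystem S) (g : S) (Q : Subgroup S) :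
    FConj F Q (mapConj g Q) := by
  have h : ∀ p ∈ Q, g * p * g⁻¹ ∈ mapConj g Q := by
    intro p hp; rw [mem_mapConj]
    have : g⁻¹ * (g * p * g⁻¹) * g = p := by group
    rw [this]; exact hp
  refine ⟨conjHom Q (mapConj g Q) g h, F.conj_mem _ _ g h, ?_, ?_⟩
  · intro a b hab
    have : (a : S) = b := by
      have := congrArg (fun z : ↥(mapConj g Q) => (z : S)) hab
      simp only [conjHom] at this
      exact mul_left_cancel (mul_right_cancel this)
    exact Subtype.ext this
  · rintro ⟨y, hy⟩
    rw [mem_mapConj] at hy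
    refine ⟨⟨g⁻¹ * y * g, hy⟩, ?_⟩
    apply Subtype.ext
    show g * (g⁻¹ * y * g) * g⁻¹ = y
    group

private noncomputable def fixPts (K Q : Subgroup S) : ℕ :=
  Nat.card {x : S ⧸ K // ∀ q ∈ Q, q • x = x}

private lemma fixedCount_eq_finsum (c : Subgroup S → ℚ) (Q : Subgroup S) :
    fixedCount c Q = ∑ᶠ H : Subgroup S, c H * (fixPts H Q : ℚ) := rfl

private lemma fixedCount_eq_sum [Fintype S] (c : Subgroup S → ℚ) (Q : Subgroup S) :
    fixedCount c Q = ∑ H : Subgroup S, c H * (fixPts H Q : ℚ) := by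
  rw [fixedCount_eq_finsum]
  exact finsum_eq_sum_of_fintype _

private lemma fixPts_mapConj (K Q : Subgroup S) (g : S) :
    fixPts K (mapConj g Q) = fixPts K Q := by
  apply Nat.card_congr
  refine (Equiv.subtypeEquiv (MulAction.toPerm g : Equiv.Perm (S ⧸ K)) ?_).symm
  intro x
  constructor
  · intro hx q hq
    rw [mem_mapConj] at hq
    show q • (g • x) = g • x
    have h1 : q • (g • x) = g • ((g⁻¹ * q * g) • x) := by
      rw [smul_smul, smul_smul]; congr 1; group
    rw [h1, hx _ hq]
  · intro hx q hq
    have hgq : g * q * g⁻¹ ∈ mapConj g Q := by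
      rw [mem_mapConj]
      have : g⁻¹ * (g * q * g⁻¹) * g = q := by group
      rw [this]; exact hq
    have h2 := hx _ hgq
    show q • x = x
    apply smul_left_cancel g
    calc g • (q • x) = (g * q * g⁻¹) • (g • x) := by
          rw [smul_smul, smul_smul]; congr 1; group
    _ = g • x := h2

private lemma fixedCount_mapConj (c : Subgroup S → ℚ) (g : S) (Q : Subgroup S) :
    fixedCount c (mapConj g Q) = fixedCount c Q := by
  rw [fixedCount_eq_finsum, fixedCount_eq_finsum]
  apply finsum_congr
  intro K
  rw [fixPts_mapConj]

private lemma exists_conj_le {K Q : Subgroup S} (x : S ⧸ K) (hx : ∀ q ∈ Q, q • x = x) :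
    ∃ g : S, x = QuotientGroup.mk g ∧ mapConj g⁻¹ Q ≤ K := by
  obtain ⟨g, rfl⟩ := QuotientGroup.mk_surjective x
  refine ⟨g, rfl, ?_⟩
  intro y hy
  rw [mem_mapConj] at hy
  -- hy : g⁻¹⁻¹ * y * g⁻¹ ∈ Q, i.e. g * y * g⁻¹ ∈ Q
  have hq : (g * y * g⁻¹)⁻¹ ∈ Q := by
    apply inv_mem
    have : g⁻¹⁻¹ * y * g⁻¹ = g * y * g⁻¹ := by group
    rwa [this] at hy
  have h2 := hx _ hq
  have h3 : (QuotientGroup.mk ((g * y * g⁻¹)⁻¹ * g) : S ⧸ K) = QuotientGroup.mk g := h2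
  have h4 := QuotientGroup.eq.mp h3
  -- h4 : ((g*y*g⁻¹)⁻¹ * g)⁻¹ * g ∈ K
  have : ((g * y * g⁻¹)⁻¹ * g)⁻¹ * g = y := by group
  rwa [this] at h4

private lemma fixPts_eq_zero {K Q : Subgroup S}
    (h : ∀ g : S, ¬ mapConj g Q ≤ K) : fixPts K Q = 0 := by
  have : IsEmpty {x : S ⧸ K // ∀ q ∈ Q, q • x = x} := by
    constructor; rintro ⟨x, hx⟩
    obtain ⟨g, rfl, hle⟩ := exists_conj_le x hx
    exact h g⁻¹ hle
  exact Nat.card_of_isEmpty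

private lemma fixPts_card_eq {K P' : Subgroup S} (g₀ : S) (hg₀ : P' = mapConj g₀ K)
    (hmax : ∀ g : S, mapConj g P' ≤ K → mapConj g P' = K) :
    fixPts K P' = Nat.card (↥(Subgroup.normalizer (K : Set S)) ⧸ K.subgroupOf (Subgroup.normalizer (K : Set S))) := by
  set N := (Subgroup.normalizer (K : Set S)) with hN
  have hfix : ∀ n : ↥N, ∀ q ∈ P', q • (QuotientGroup.mk (g₀ * n) : S ⧸ K)
      = QuotientGroup.mk (g₀ * n) := by
    intro n q hq
    show (QuotientGroup.mk (q * (g₀ * n)) : S ⧸ K) = QuotientGroup.mk (g₀ * n)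
    rw [QuotientGroup.eq]
    have hq' : q⁻¹ ∈ P' := inv_mem hq
    rw [hg₀, mem_mapConj] at hq'
    -- hq' : g₀⁻¹ * q⁻¹ * g₀ ∈ K
    have h5 : (q * (g₀ * (n : S)))⁻¹ * (g₀ * n)
        = (n : S)⁻¹ * (g₀⁻¹ * q⁻¹ * g₀) * ((n : S)⁻¹)⁻¹ := by group
    rw [h5]
    have hn : ((n : S)⁻¹) ∈ N := inv_mem n.2
    exact (Subgroup.mem_normalizer_iff.mp hn _).mp hq'
  let f : (↥N ⧸ K.subgroupOf N) → {x : S ⧸ K // ∀ q ∈ P', q • x = x} :=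
    fun y => Quotient.liftOn' y
      (fun n => ⟨QuotientGroup.mk (g₀ * n), hfix n⟩)
      (by
        intro n m hnm
        rw [QuotientGroup.leftRel_apply] at hnm
        rw [Subgroup.mem_subgroupOf] at hnm
        apply Subtype.ext
        show (QuotientGroup.mk (g₀ * n) : S ⧸ K) = QuotientGroup.mk (g₀ * m)
        rw [QuotientGroup.eq]
        have : (g₀ * (n : S))⁻¹ * (g₀ * m) = (n : S)⁻¹ * m := by group
        rw [this]; exact hnm)
  have hinj : Function.Injective f := by
    intro a b hab
    induction a using Quotient.inductionOn'
    induction b using Quotient.inductionOn'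
    rename_i n m
    have h6 : (QuotientGroup.mk (g₀ * n) : S ⧸ K) = QuotientGroup.mk (g₀ * m) :=
      congrArg Subtype.val hab
    rw [QuotientGroup.eq] at h6
    have h7 : (g₀ * (n : S))⁻¹ * (g₀ * m) = (n : S)⁻¹ * m := by group
    rw [h7] at h6
    apply Quotient.sound'
    rw [QuotientGroup.leftRel_apply, Subgroup.mem_subgroupOf]
    exact h6
  have hsurj : Function.Surjective f := by
    rintro ⟨x, hx⟩
    obtain ⟨g, rfl, hle⟩ := exists_conj_le x hx
    have heq : mapConj g⁻¹ P' = K := hmax g⁻¹ hle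
    have hKeq : mapConj (g⁻¹ * g₀) K = K := by
      rw [← mapConj_mapConj, ← hg₀]; exact heq
    have hn₀ : g₀⁻¹ * g ∈ N := by
      rw [hN, Subgroup.mem_normalizer_iff]
      intro h
      have e1 : h ∈ mapConj (g⁻¹ * g₀) K ↔ (g₀⁻¹ * g) * h * (g₀⁻¹ * g)⁻¹ ∈ K := by
        rw [mem_mapConj]
        constructor <;> intro hh
        · have : g₀⁻¹ * g * h * (g₀⁻¹ * g)⁻¹ = (g⁻¹ * g₀)⁻¹ * h * (g⁻¹ * g₀) := by group
          rw [this]; exact hh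
        · have : (g⁻¹ * g₀)⁻¹ * h * (g⁻¹ * g₀) = g₀⁻¹ * g * h * (g₀⁻¹ * g)⁻¹ := by group
          rw [this]; exact hh
      rw [← e1, hKeq]
    refine ⟨QuotientGroup.mk ⟨g₀⁻¹ * g, hn₀⟩, ?_⟩
    apply Subtype.ext
    show (QuotientGroup.mk (g₀ * (g₀⁻¹ * g)) : S ⧸ K) = QuotientGroup.mk g
    congr 1
    group
  exact Nat.card_congr (Equiv.ofBijective f ⟨hinj, hsurj⟩).symm

end AuxStab

open scoped Classical

/-- The one-step stabilization: adding suitable nonnegative multiples of `S/P'` over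
`S`-conjugacy representatives `P'` of a maximal `F`-class `Pcl` in `H` equalizes the
fixed point counts on `Pcl` without changing them outside `H`. -/
theorem one_step_stabilization
    (p : ℕ) [Fact p.Prime] (S : Type) [Group S] [Fintype S] (hS : IsPGroup p S)
    (F : FusionSystem S) (H : Set (Subgroup S))
    (hHconj : ∀ P ∈ H, ∀ P' : Subgroup S, FConj F P P' → P' ∈ H)
    (hHsub : ∀ P ∈ H, ∀ P' : Subgroup S, P' ≤ P → P' ∈ H)
    (X₀ : Subgroup S → ℚ)
    (hX₀ : ∀ P P' : Subgroup S, P ∉ H → P' ∉ H → FConj F P P' →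
      fixedCount X₀ P = fixedCount X₀ P')
    (Pcl : Set (Subgroup S)) (hPclH : Pcl ⊆ H) (hPclne : Pcl.Nonempty)
    (hPclclass : ∀ P ∈ Pcl, ∀ P' : Subgroup S, FConj F P P' ↔ P' ∈ Pcl)
    (hPclmax : ∀ P ∈ Pcl, ∀ Q ∈ H, P ≤ Q → P = Q)
    (P : Subgroup S) (hP : P ∈ Pcl)
    (hPmax : ∀ P' ∈ Pcl, fixedCount X₀ P' ≤ fixedCount X₀ P)
    (R : Finset (Subgroup S)) (hRPcl : ↑R ⊆ Pcl)
    (hRrep : ∀ Q ∈ Pcl, ∃! Q' : Subgroup S, Q' ∈ R ∧ SConj Q' Q)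
    (X₁ : Subgroup S → ℚ)
    (hX₁ : ∀ K : Subgroup S, X₁ K = X₀ K +
      (if K ∈ R then
        (fixedCount X₀ P - fixedCount X₀ K) /
          (Nat.card (↥(Subgroup.normalizer (K : Set S)) ⧸ K.subgroupOf (Subgroup.normalizer (K : Set S))) : ℚ)
       else 0)) :
    (∀ P' ∈ Pcl, ∀ P'' ∈ Pcl, fixedCount X₁ P' = fixedCount X₁ P'') ∧
    (∀ Q : Subgroup S, Q ∉ H → fixedCount X₁ Q = fixedCount X₀ Q) ∧
    (∀ K : Subgroup S, X₀ K ≤ X₁ K) := by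
  set n : Subgroup S → ℚ :=
    fun K => (Nat.card (↥(Subgroup.normalizer (K : Set S)) ⧸ K.subgroupOf (Subgroup.normalizer (K : Set S))) : ℚ) with hn
  set c : Subgroup S → ℚ := fun K => (fixedCount X₀ P - fixedCount X₀ K) / n K with hc
  have hsplit : ∀ Q : Subgroup S, fixedCount X₁ Q =
      fixedCount X₀ Q + ∑ K ∈ R, c K * (fixPts K Q : ℚ) := by
    intro Q
    rw [fixedCount_eq_sum, fixedCount_eq_sum]
    have key : ∀ K : Subgroup S, X₁ K * (fixPts K Q : ℚ)
        = X₀ K * (fixPts K Q : ℚ) + (if K ∈ R then c K * (fixPts K Q : ℚ) else 0) := by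
      intro K
      rw [hX₁ K]
      by_cases h : K ∈ R <;> simp [h, add_mul, hc, hn]
    rw [Finset.sum_congr rfl (fun K _ => key K), Finset.sum_add_distrib]
    congr 1
    rw [Finset.sum_ite_mem, Finset.univ_inter]
  have hb : ∀ Q : Subgroup S, Q ∉ H → fixedCount X₁ Q = fixedCount X₀ Q := by
    intro Q hQ
    rw [hsplit]
    have hz : ∀ K ∈ R, c K * (fixPts K Q : ℚ) = 0 := by
      intro K hK
      have h0 : fixPts K Q = 0 := by
        apply fixPts_eq_zero
        intro g hle
        apply hQ
        have h1 : mapConj g Q ∈ H := hHsub K (hPclH (hRPcl hK)) _ hle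
        have h2 : FConj F (mapConj g Q) Q := by
          have := fconj_mapConj F g⁻¹ (mapConj g Q)
          rwa [mapConj_inv] at this
        exact hHconj _ h1 _ h2
      rw [h0]; simp
    rw [Finset.sum_congr rfl hz]; simp
  have ha : ∀ P' ∈ Pcl, fixedCount X₁ P' = fixedCount X₀ P := by
    intro P' hP'
    obtain ⟨K₀, ⟨hK₀R, hK₀conj⟩, huniq⟩ := hRrep P' hP'
    obtain ⟨g₀, hg₀⟩ := hK₀conj
    have hg₀' : P' = mapConj g₀ K₀ := hg₀
    rw [hsplit]
    rw [Finset.sum_eq_single K₀ ?side ?notmem]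
    case side =>
      intro K hK hne
      have h0 : fixPts K P' = 0 := by
        apply fixPts_eq_zero
        intro g hle
        have hmem : mapConj g P' ∈ Pcl :=
          (hPclclass P' hP' _).1 (fconj_mapConj F g P')
        have heq : mapConj g P' = K := hPclmax _ hmem K (hPclH (hRPcl hK)) hle
        have hsconj : SConj K P' := by
          refine ⟨g⁻¹, ?_⟩
          show P' = mapConj g⁻¹ K
          rw [← heq, mapConj_inv]
        exact hne (huniq K ⟨hK, hsconj⟩)
      rw [h0]; simp
    case notmem => intro h; exact absurd hK₀R h
    have hmax' : ∀ g : S, mapConj g P' ≤ K₀ → mapConj g P' = K₀ := by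
      intro g hle
      exact hPclmax _ ((hPclclass P' hP' _).1 (fconj_mapConj F g P')) K₀
        (hPclH (hRPcl hK₀R)) hle
    have hfx : (fixPts K₀ P' : ℚ) = n K₀ := by
      rw [fixPts_card_eq g₀ hg₀' hmax']
    have hn0 : n K₀ ≠ 0 := by
      have hpos : (0:ℕ) < Nat.card (↥(Subgroup.normalizer (K₀ : Set S)) ⧸ K₀.subgroupOf (Subgroup.normalizer (K₀ : Set S))) :=
        Nat.card_pos
      simp only [hn]
      exact_mod_cast hpos.ne'
    have hcnt : fixedCount X₀ K₀ = fixedCount X₀ P' := by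
      rw [hg₀']
      exact (fixedCount_mapConj X₀ g₀ K₀).symm
    rw [hfx, hc]
    field_simp
    rw [hcnt]
    ring
  refine ⟨fun P' h1 P'' h2 => (ha P' h1).trans (ha P'' h2).symm, hb, ?_⟩
  intro K
  rw [hX₁ K]
  apply le_add_of_nonneg_right
  by_cases h : K ∈ R
  · simp only [h, if_true]
    apply div_nonneg
    · exact sub_nonneg.2 (hPmax K (hRPcl h))
    · exact Nat.cast_nonneg _
  · simp [h]
end
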